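/- Let N ≥ 3 be an integer, p > 2, K ≥ 1 an integer, and γ ∈ (0, γ_p). If U and Ũ are two bounded C² solutions of (P_γ), each having exactly K−1 zeros in (0,∞) and each satisfying lim_{t→∞} U(t) > 0 (respectively lim_{t→∞} Ũ(t) > 0), then U = Ũ. -/

import Mathlib

open Real Filter Set MeasureTheory Asymptotics

noncomputable section

/-- `α_p = max{((N−2)p − 2N)/2, 0}`. -/
def alphaP (N : ℕ) (p : ℝ) : ℝ := max ((((N : ℝ) - 2) * p - 2 * (N : ℝ)) / 2) 0

/-- `γ_p = (N−2)/(N+α_p)`. -/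
def gammaP (N : ℕ) (p : ℝ) : ℝ := ((N : ℝ) - 2) / ((N : ℝ) + alphaP N p)

/-- `U` is bounded on `[0,∞)`. -/
def BddOn (U : ℝ → ℝ) : Prop := ∃ C : ℝ, ∀ t, 0 ≤ t → |U t| ≤ C

/-- `U` is a C² solution of problem (P_γ):
`−(e^{−γt}U')' = e^{−t}|U|^{p−2}U` on `[0,∞)`, `U(0) = 0`. -/
def SolP (p γ : ℝ) (U : ℝ → ℝ) : Prop :=
  ContDiff ℝ 2 U ∧ U 0 = 0 ∧
  ∀ t : ℝ, 0 ≤ t →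
    deriv (fun s => Real.exp (-γ * s) * deriv U s) t
      = -(Real.exp (-t) * |U t| ^ (p - 2) * U t)

/-- `U` has exactly `m` zeros in `(0,∞)`. -/
def ZeroCount (U : ℝ → ℝ) (m : ℕ) : Prop :=
  {t : ℝ | 0 < t ∧ U t = 0}.Finite ∧ {t : ℝ | 0 < t ∧ U t = 0}.ncard = m

/-- characterization of `U_γ`: bounded solution of (P_γ) with exactly `K−1`
zeros in `(0,∞)` and positive limit at `+∞`. -/
def IsUsol (p γ : ℝ) (K : ℕ) (U : ℝ → ℝ) : Prop :=
  SolP p γ U ∧ BddOn U ∧ ZeroCount U (K - 1) ∧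
    ∃ L : ℝ, 0 < L ∧ Filter.Tendsto U Filter.atTop (nhds L)

/-- `Ψ` is a bounded solution of the linearized eigenvalue problem (E_γ) with
eigenvalue `ν`: `−(e^{−γt}Ψ')' − (p−1)e^{−t}|U_γ|^{p−2}Ψ = ν e^{−γt}Ψ`, `Ψ(0)=0`. -/
def EigenEq (p γ : ℝ) (U : ℝ → ℝ) (ν : ℝ) (Ψ : ℝ → ℝ) : Prop :=
  ContDiff ℝ 2 Ψ ∧ Ψ 0 = 0 ∧ BddOn Ψ ∧
  ∀ t : ℝ, 0 ≤ t →
    deriv (fun s => Real.exp (-γ * s) * deriv Ψ s) t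
      = -((p - 1) * Real.exp (-t) * |U t| ^ (p - 2) * Ψ t + ν * Real.exp (-γ * t) * Ψ t)

/-- nontrivial on `[0,∞)`. -/
def Nontriv (Ψ : ℝ → ℝ) : Prop := ∃ t : ℝ, 0 ≤ t ∧ Ψ t ≠ 0

/-- `ν` is a negative eigenvalue of (E_γ). -/
def IsNegEigen (p γ : ℝ) (K : ℕ) (ν : ℝ) : Prop :=
  ν < 0 ∧ ∀ U : ℝ → ℝ, IsUsol p γ K U → ∃ Ψ, EigenEq p γ U ν Ψ ∧ Nontriv Ψ

/-- `ν j γ` (for `1 ≤ j ≤ K`) enumerates the negative eigenvalues of (E_γ)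
in strictly increasing order. -/
def Enumerates (p : ℝ) (K : ℕ) (γP : ℝ) (ν : ℕ → ℝ → ℝ) : Prop :=
  ∀ γ : ℝ, 0 ≤ γ → γ < γP →
    (∀ j j' : ℕ, 1 ≤ j → j < j' → j' ≤ K → ν j γ < ν j' γ) ∧
    (∀ j : ℕ, 1 ≤ j → j ≤ K → IsNegEigen p γ K (ν j γ)) ∧
    (∀ μ : ℝ, IsNegEigen p γ K μ → ∃ j : ℕ, 1 ≤ j ∧ j ≤ K ∧ μ = ν j γ)

lemma gfun_hasDerivAt {p : ℝ} (hp : 2 < p) (x : ℝ) :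
    HasDerivAt (fun u : ℝ => |u| ^ (p-2) * u) ((p-1) * |x| ^ (p-2)) x := by
  rcases lt_trichotomy x 0 with hx | hx | hx
  · -- x < 0 : near x, |u| = -u and |u|^(p-2)*u = -((-u)^(p-1))
    have hneg : HasDerivAt (fun u : ℝ => -u) (-1) x := (hasDerivAt_id x).neg
    have h2 : HasDerivAt (fun u : ℝ => (-u) ^ (p-1))
        ((p-1) * (-x) ^ (p-1-1) * (-1)) x :=
      (Real.hasDerivAt_rpow_const (x := -x) (p := p-1) (Or.inl (by linarith))).comp x hneg
    have h3 : HasDerivAt (fun u : ℝ => -((-u) ^ (p-1)))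
        ((p-1) * (-x) ^ (p-2)) x := by
      have := h2.fun_neg
      refine this.congr_deriv ?_
      rw [show p - 1 - 1 = p - 2 by ring]
      ring
    have habs : |x| = -x := abs_of_neg hx
    rw [habs] at *
    apply h3.congr_of_eventuallyEq
    have hmem : Iio (0:ℝ) ∈ nhds x := Iio_mem_nhds hx
    filter_upwards [hmem] with u hu
    have hu' : (0:ℝ) < -u := by simpa using hu
    rw [abs_of_neg hu, show p - 1 = p - 2 + 1 by ring, Real.rpow_add_one (ne_of_gt hu')]
    ring
  · -- x = 0
    subst hx
    have hval : (p-1) * |(0:ℝ)| ^ (p-2) = 0 := by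
      rw [abs_zero, Real.zero_rpow (by linarith : p - 2 ≠ 0)]; ring
    rw [hval]
    rw [hasDerivAt_iff_tendsto_slope]
    have hcont : ContinuousAt (fun u : ℝ => |u| ^ (p-2)) 0 := by
      have h1 : ContinuousAt (fun z : ℝ => z ^ (p-2)) (|(0:ℝ)|) := by
        rw [abs_zero]
        exact Real.continuousAt_rpow_const 0 (p-2) (Or.inr (by linarith))
      exact h1.comp continuous_abs.continuousAt
    have h0 : (|(0:ℝ)|) ^ (p-2) = 0 := by
      rw [abs_zero]; exact Real.zero_rpow (by linarith)
    have htend : Tendsto (fun u : ℝ => |u| ^ (p-2)) (nhdsWithin 0 {(0:ℝ)}ᶜ) (nhds 0) := by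
      have := hcont.tendsto
      rw [h0] at this
      exact this.mono_left nhdsWithin_le_nhds
    apply htend.congr'
    filter_upwards [self_mem_nhdsWithin] with u hu
    have hu0 : u ≠ 0 := hu
    simp only [slope_def_field, div_eq_iff, sub_zero, mul_zero]
    field_simp
  · -- x > 0
    have h2 : HasDerivAt (fun u : ℝ => u ^ (p-1)) ((p-1) * x ^ (p-2)) x := by
      have := Real.hasDerivAt_rpow_const (x := x) (p := p-1) (Or.inl (ne_of_gt hx))
      rwa [show p - 1 - 1 = p - 2 by ring] at this
    have habs : |x| = x := abs_of_pos hx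
    rw [habs]
    apply h2.congr_of_eventuallyEq
    have hmem : Ioi (0:ℝ) ∈ nhds x := Ioi_mem_nhds hx
    filter_upwards [hmem] with u hu
    rw [abs_of_pos hu, show p - 1 = p - 2 + 1 by ring, Real.rpow_add_one (ne_of_gt hu)]

lemma gfun_cont {p : ℝ} (hp : 2 < p) : Continuous (fun u : ℝ => |u| ^ (p-2) * u) :=
  continuous_iff_continuousAt.2 fun x => (gfun_hasDerivAt hp x).continuousAt

lemma gfun_lipschitz {p : ℝ} (hp : 2 < p) {C a b : ℝ}
    (ha : |a| ≤ C) (hb : |b| ≤ C) :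
    |(|a| ^ (p-2) * a) - (|b| ^ (p-2) * b)| ≤ ((p-1) * C ^ (p-2)) * |a - b| := by
  have hC : 0 ≤ C := le_trans (abs_nonneg a) ha
  set g : ℝ → ℝ := fun u => |u| ^ (p-2) * u with hg
  have key : ∀ x y : ℝ, x < y → |x| ≤ C → |y| ≤ C →
      |g y - g x| ≤ ((p-1) * C ^ (p-2)) * |y - x| := by
    intro x y hxy hxC hyC
    obtain ⟨c, hc, hceq⟩ := exists_hasDerivAt_eq_slope g
      (fun u => (p-1) * |u| ^ (p-2)) hxy
      (fun u _ => (gfun_hasDerivAt hp u).continuousAt.continuousWithinAt)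
      (fun u _ => gfun_hasDerivAt hp u)
    have hcC : |c| ≤ C := by
      rw [abs_le] at hxC hyC ⊢
      constructor <;> [linarith [hc.1, hxC.1]; linarith [hc.2, hyC.2]]
    have hyx : y - x ≠ 0 := by linarith
    have : g y - g x = ((p-1) * |c| ^ (p-2)) * (y - x) := by
      rw [eq_div_iff hyx] at hceq
      linarith [hceq]
    rw [this, abs_mul]
    apply mul_le_mul_of_nonneg_right _ (abs_nonneg _)
    rw [abs_of_nonneg (mul_nonneg (by linarith : (0:ℝ) ≤ p - 1) (Real.rpow_nonneg (abs_nonneg c) _))]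
    apply mul_le_mul_of_nonneg_left _ (by linarith : (0:ℝ) ≤ p - 1)
    exact Real.rpow_le_rpow (abs_nonneg c) hcC (by linarith)
  rcases lt_trichotomy a b with h | h | h
  · have := key a b h ha hb
    rwa [abs_sub_comm (g b), abs_sub_comm b] at this
  · subst h; simp
  · exact key b a h hb ha

lemma gfun_bound {p : ℝ} (hp : 2 < p) {C u : ℝ} (hu : |u| ≤ C) :
    |(|u| ^ (p-2) * u)| ≤ C ^ (p-2) * C := by
  have hC : 0 ≤ C := le_trans (abs_nonneg u) hu
  rw [abs_mul, abs_of_nonneg (by positivity : (0:ℝ) ≤ |u| ^ (p-2))]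
  exact mul_le_mul (Real.rpow_le_rpow (abs_nonneg u) hu (by linarith)) hu (abs_nonneg u)
    (by positivity)

/-- If `deriv D ≥ c > 0` on `[T,∞)` and `D` is bounded on `[0,∞)`, contradiction. -/
lemma unbdd_of_deriv_ge (D : ℝ → ℝ) (hD : Differentiable ℝ D) {C : ℝ}
    (hC : ∀ t, 0 ≤ t → |D t| ≤ C) {T c : ℝ} (hT : 0 ≤ T) (hc : 0 < c)
    (h : ∀ s, T ≤ s → c ≤ deriv D s) : False := by
  have hC0 : 0 ≤ C := le_trans (abs_nonneg _) (hC 0 le_rfl)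
  have hmono : MonotoneOn (fun s => D s - c * s) (Ici T) := by
    apply monotoneOn_of_deriv_nonneg (convex_Ici T)
    · exact (hD.continuous.sub (continuous_const.mul continuous_id)).continuousOn
    · intro x _
      exact ((hD x).sub ((differentiable_id.const_mul c) x)).differentiableWithinAt
    · intro x hx
      rw [interior_Ici] at hx
      have hd : HasDerivAt (fun s => D s - c * s) (deriv D x - c * 1) x :=
        (hD x).hasDerivAt.sub ((hasDerivAt_id x).const_mul c)
      rw [hd.deriv]
      have := h x (le_of_lt hx)
      linarith
  set t := T + (2 * C + 1) / c with ht
  have htT : T ≤ t := by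
    rw [ht]
    have : 0 < (2 * C + 1) / c := by positivity
    linarith
  have ht0 : 0 ≤ t := le_trans hT htT
  have hkey := hmono (self_mem_Ici) (mem_Ici.2 htT) htT
  simp only at hkey
  -- D T - c*T ≤ D t - c*t
  have hDt : D T + (2 * C + 1) ≤ D t := by
    have hct : c * t = c * T + (2 * C + 1) := by
      rw [ht, mul_add, mul_div_cancel₀ _ hc.ne']
    rw [hct] at hkey
    linarith
  have h1 := abs_le.1 (hC T hT)
  have h2 := abs_le.1 (hC t ht0)
  linarith

/-- monotone-trick: `F + (c/b) e^{-bs}` is antitone on `[t,∞)` when `|F'| ≤ c e^{-bs}`. -/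
lemma antitone_aux (F : ℝ → ℝ) (hF : Differentiable ℝ F) {b c : ℝ} (hb : 0 < b)
    (hF' : ∀ s, 0 ≤ s → |deriv F s| ≤ c * exp (-(b*s))) {t : ℝ} (ht : 0 ≤ t) :
    AntitoneOn (fun s => F s + (c/b) * exp (-(b*s))) (Ici t) := by
  have hexp : ∀ s : ℝ, HasDerivAt (fun s => exp (-(b*s))) (exp (-(b*s)) * -(b*1)) s := by
    intro s
    exact (((hasDerivAt_id s).const_mul b).neg).exp
  apply antitoneOn_of_deriv_nonpos (convex_Ici t)
  · apply Continuous.continuousOn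
    exact hF.continuous.add (continuous_const.mul ((continuous_const.mul continuous_id).neg.rexp))
  · intro x _
    exact ((hF x).add (((hexp x).const_mul (c/b)).differentiableAt)).differentiableWithinAt
  · intro x hx
    rw [interior_Ici] at hx
    have hx0 : 0 ≤ x := le_trans ht (le_of_lt hx)
    have hd : HasDerivAt (fun s => F s + (c/b) * exp (-(b*s)))
        (deriv F x + (c/b) * (exp (-(b*x)) * -(b*1))) x :=
      (hF x).hasDerivAt.add ((hexp x).const_mul (c/b))
    rw [hd.deriv]
    have hbnd := (abs_le.1 (hF' x hx0)).2
    have : (c/b) * (exp (-(b*x)) * -(b*1)) = -(c * exp (-(b*x))) := by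
      field_simp
    rw [this]
    linarith

lemma exp_neg_tendsto {b : ℝ} (hb : 0 < b) :
    Tendsto (fun s : ℝ => exp (-(b*s))) atTop (nhds 0) := by
  have h1 : Tendsto (fun s : ℝ => -(b*s)) atTop atBot :=
    (tendsto_neg_atTop_atBot).comp (tendsto_id.const_mul_atTop hb)
  exact Real.tendsto_exp_atBot.comp h1

/-- quantitative decay from derivative decay plus limit zero. -/
lemma decay_bound (F : ℝ → ℝ) (hF : Differentiable ℝ F) {b c : ℝ} (hb : 0 < b)
    (hF' : ∀ s, 0 ≤ s → |deriv F s| ≤ c * exp (-(b*s)))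
    (hlim : Tendsto F atTop (nhds 0)) :
    ∀ t, 0 ≤ t → |F t| ≤ (c/b) * exp (-(b*t)) := by
  intro t ht
  have hupper : AntitoneOn (fun s => F s + (c/b) * exp (-(b*s))) (Ici t) :=
    antitone_aux F hF hb hF' ht
  have hlower : AntitoneOn (fun s => (fun u => -F u) s + (c/b) * exp (-(b*s))) (Ici t) := by
    apply antitone_aux (fun u => -F u) hF.neg hb _ ht
    intro s hs
    have hneg : deriv (fun u => -F u) s = -deriv F s := deriv.neg
    rw [hneg, abs_neg]
    exact hF' s hs
  have htend : Tendsto (fun s => F s + (c/b) * exp (-(b*s))) atTop (nhds 0) := by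
    have := hlim.add ((exp_neg_tendsto hb).const_mul (c/b))
    simpa using this
  have htend2 : Tendsto (fun s => (fun u => -F u) s + (c/b) * exp (-(b*s))) atTop (nhds 0) := by
    have := hlim.neg.add ((exp_neg_tendsto hb).const_mul (c/b))
    simpa using this
  have h1 : 0 ≤ F t + (c/b) * exp (-(b*t)) := by
    apply le_of_tendsto htend
    filter_upwards [eventually_ge_atTop t] with u hu
    exact hupper (self_mem_Ici) (mem_Ici.2 hu) hu
  have h2 : 0 ≤ (fun u => -F u) t + (c/b) * exp (-(b*t)) := by
    apply le_of_tendsto htend2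
    filter_upwards [eventually_ge_atTop t] with u hu
    exact hlower (self_mem_Ici) (mem_Ici.2 hu) hu
  simp only [] at h2
  rw [abs_le]
  constructor <;> linarith

/-- If `deriv D t = e^{γt} F t`, `D` bounded, `|F'| ≤ c e^{-s}`, then `F → 0`. -/
lemma tendsto_zero_aux (F D : ℝ → ℝ) (hF : Differentiable ℝ F) (hD : Differentiable ℝ D)
    {γ C c : ℝ} (hγ : 0 < γ)
    (hrel : ∀ t, deriv D t = exp (γ*t) * F t)
    (hDb : ∀ t, 0 ≤ t → |D t| ≤ C)
    (hF' : ∀ s, 0 ≤ s → |deriv F s| ≤ c * exp (-(1*s))) :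
    Tendsto F atTop (nhds 0) := by
  have hc0 : 0 ≤ c := by
    have := le_trans (abs_nonneg _) (hF' 0 le_rfl)
    simpa using this
  set H : ℝ → ℝ := fun s => F s + (c/1) * exp (-(1*s)) with hH
  have hant : AntitoneOn H (Ici 0) := antitone_aux F hF one_pos hF' le_rfl
  have hGanti : Antitone (fun s => H (max s 0)) := by
    intro s1 s2 h12
    exact hant (mem_Ici.2 (le_max_right s1 0)) (mem_Ici.2 (le_max_right s2 0))
      (max_le_max h12 le_rfl)
  have hHev : (fun s => H (max s 0)) =ᶠ[atTop] H := by
    filter_upwards [eventually_ge_atTop (0:ℝ)] with s hs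
    rw [max_eq_left hs]
  have hexp1 : Tendsto (fun s : ℝ => (c/1) * exp (-(1*s))) atTop (nhds 0) := by
    have := (exp_neg_tendsto one_pos).const_mul (c/1)
    simpa using this
  -- helper for deriving False when F is eventually ≥ or ≤ a nonzero constant
  have hpos_contra : ∀ m : ℝ, 0 < m → (∀ᶠ s in atTop, m ≤ F s) → False := by
    intro m hm hev
    obtain ⟨T, hT⟩ := eventually_atTop.1 hev
    apply unbdd_of_deriv_ge D hD hDb (T := max T 0) (c := m) (le_max_right T 0) hm
    intro s hs
    have hsT : T ≤ s := le_trans (le_max_left T 0) hs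
    have hs0 : 0 ≤ s := le_trans (le_max_right T 0) hs
    rw [hrel s]
    have h1 : (1:ℝ) ≤ exp (γ * s) := Real.one_le_exp (by positivity)
    have h2 : m ≤ F s := hT s hsT
    nlinarith [exp_pos (γ * s)]
  have hneg_contra : ∀ m : ℝ, m < 0 → (∀ᶠ s in atTop, F s ≤ m) → False := by
    intro m hm hev
    obtain ⟨T, hT⟩ := eventually_atTop.1 hev
    apply unbdd_of_deriv_ge (fun t => -D t) hD.neg
      (C := C) (fun t ht => by rw [abs_neg]; exact hDb t ht)
      (T := max T 0) (c := -m) (le_max_right T 0) (by linarith)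
    intro s hs
    have hsT : T ≤ s := le_trans (le_max_left T 0) hs
    have hs0 : 0 ≤ s := le_trans (le_max_right T 0) hs
    have hneg : deriv (fun t => -D t) s = -deriv D s := deriv.neg
    rw [hneg, hrel s]
    have h1 : (1:ℝ) ≤ exp (γ * s) := Real.one_le_exp (by positivity)
    have h2 : F s ≤ m := hT s hsT
    nlinarith [exp_pos (γ * s)]
  by_cases hbdd : BddBelow (range (fun s => H (max s 0)))
  · have hGlim := tendsto_atTop_ciInf hGanti hbdd
    set ℓ := ⨅ s, H (max s 0) with hℓ
    have hHlim : Tendsto H atTop (nhds ℓ) := hGlim.congr' hHev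
    have hFlim : Tendsto F atTop (nhds ℓ) := by
      have := hHlim.sub hexp1
      simp only [hH, add_sub_cancel_right, sub_zero] at this
      exact this
    have hℓ0 : ℓ = 0 := by
      rcases lt_trichotomy ℓ 0 with h | h | h
      · exfalso
        apply hneg_contra (ℓ/2) (by linarith)
        exact hFlim.eventually_le_const (show ℓ < ℓ/2 by linarith)
      · exact h
      · exfalso
        apply hpos_contra (ℓ/2) (by linarith)
        exact hFlim.eventually_const_le (show ℓ/2 < ℓ by linarith)
    rwa [hℓ0] at hFlim
  · exfalso
    have hGbot : Tendsto (fun s => H (max s 0)) atTop atBot := by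
      rw [tendsto_atBot]
      intro R
      obtain ⟨y, ⟨s₀, hy⟩, hyR⟩ := not_bddBelow_iff.1 hbdd R
      filter_upwards [eventually_ge_atTop s₀] with s hs
      exact le_of_lt (lt_of_le_of_lt (le_trans (hGanti hs) (le_of_eq hy)) hyR)
    have hHbot : Tendsto H atTop atBot := hGbot.congr' hHev
    have hFbot : Tendsto F atTop atBot := by
      apply tendsto_atBot_mono _ hHbot
      intro s
      have : 0 ≤ (c/1) * exp (-(1*s)) := by positivity
      simp only [hH]
      linarith
    exact hneg_contra (-1) (by norm_num) (hFbot.eventually_le_atBot (-1))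

/-- Two bounded solutions of the ODE with the same limit at infinity coincide on `[0,∞)`. -/
lemma same_limit_eq {p γ : ℝ} (hp : 2 < p) (hγ0 : 0 < γ) (hγ1 : γ < 1)
    (W Z : ℝ → ℝ) {L CW CZ : ℝ}
    (hW2 : ContDiff ℝ 2 W) (hZ2 : ContDiff ℝ 2 Z)
    (heqW : ∀ t, 0 ≤ t → deriv (fun s => exp (-γ * s) * deriv W s) t
      = -(exp (-t) * |W t| ^ (p-2) * W t))
    (heqZ : ∀ t, 0 ≤ t → deriv (fun s => exp (-γ * s) * deriv Z s) t
      = -(exp (-t) * |Z t| ^ (p-2) * Z t))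
    (hWb : ∀ t, 0 ≤ t → |W t| ≤ CW) (hZb : ∀ t, 0 ≤ t → |Z t| ≤ CZ)
    (hWL : Tendsto W atTop (nhds L)) (hZL : Tendsto Z atTop (nhds L)) :
    ∀ t, 0 ≤ t → W t = Z t := by
  -- regularity
  have h2eq : (2 : WithTop ℕ∞) = 1 + 1 := by norm_num
  have hW' : Differentiable ℝ W := hW2.differentiable (by norm_num)
  have hZ' : Differentiable ℝ Z := hZ2.differentiable (by norm_num)
  have hdW : Differentiable ℝ (deriv W) := by
    rw [h2eq] at hW2
    exact (contDiff_succ_iff_deriv.1 hW2).2.2.differentiable (by norm_num)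
  have hdZ : Differentiable ℝ (deriv Z) := by
    rw [h2eq] at hZ2
    exact (contDiff_succ_iff_deriv.1 hZ2).2.2.differentiable (by norm_num)
  -- constants
  set Cb : ℝ := max CW CZ with hCb
  have hCb0 : 0 ≤ Cb := le_trans (le_trans (abs_nonneg _) (hWb 0 le_rfl)) (le_max_left _ _)
  set Lc : ℝ := (p-1) * Cb ^ (p-2) with hLc
  have hLc0 : 0 ≤ Lc := mul_nonneg (by linarith) (Real.rpow_nonneg hCb0 _)
  have hWCb : ∀ t, 0 ≤ t → |W t| ≤ Cb := fun t ht => le_trans (hWb t ht) (le_max_left _ _)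
  have hZCb : ∀ t, 0 ≤ t → |Z t| ≤ Cb := fun t ht => le_trans (hZb t ht) (le_max_right _ _)
  -- the difference
  set D : ℝ → ℝ := fun t => W t - Z t with hD
  have hDdiff : Differentiable ℝ D := hW'.sub hZ'
  have hDb : ∀ t, 0 ≤ t → |D t| ≤ 2 * Cb := by
    intro t ht
    have := abs_sub (W t) (Z t)
    calc |D t| ≤ |W t| + |Z t| := abs_sub _ _
    _ ≤ 2 * Cb := by linarith [hWCb t ht, hZCb t ht]
  have hDlim : Tendsto D atTop (nhds 0) := by
    have := hWL.sub hZL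
    simpa using this
  have hderivD : ∀ t, deriv D t = deriv W t - deriv Z t := by
    intro t
    exact deriv_sub (hW' t) (hZ' t)
  have hexpdiff : Differentiable ℝ (fun t : ℝ => exp (-γ * t)) :=
    Real.differentiable_exp.comp (differentiable_id.const_mul (-γ))
  set PD : ℝ → ℝ := fun t => exp (-γ * t) * deriv D t with hPD
  have hPDsplit : PD = fun t => (exp (-γ * t) * deriv W t) - (exp (-γ * t) * deriv Z t) := by
    funext t
    rw [hPD]
    simp only [hderivD t, mul_sub]
  have hPDdiff : Differentiable ℝ PD := by
    rw [hPDsplit]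
    exact (hexpdiff.mul hdW).sub (hexpdiff.mul hdZ)
  have hrelD : ∀ t, deriv D t = exp (γ * t) * PD t := by
    intro t
    rw [hPD]
    rw [← mul_assoc, ← Real.exp_add]
    norm_num
  have hPD' : ∀ t, 0 ≤ t → deriv PD t
      = -(exp (-t) * ((|W t| ^ (p-2) * W t) - (|Z t| ^ (p-2) * Z t))) := by
    intro t ht
    rw [hPDsplit]
    rw [deriv_fun_sub ((hexpdiff t).fun_mul (hdW t)) ((hexpdiff t).fun_mul (hdZ t))]
    rw [heqW t ht, heqZ t ht]
    ring
  have hPDb : ∀ t, 0 ≤ t → |deriv PD t| ≤ Lc * exp (-t) * |D t| := by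
    intro t ht
    rw [hPD' t ht, abs_neg, abs_mul, abs_of_nonneg (le_of_lt (exp_pos (-t)))]
    have hDt : |D t| = |W t - Z t| := rfl
    rw [hDt]
    have hlip := gfun_lipschitz hp (hWCb t ht) (hZCb t ht)
    rw [← hLc] at hlip
    rw [show Lc * exp (-t) * |W t - Z t| = exp (-t) * (Lc * |W t - Z t|) by ring]
    exact mul_le_mul_of_nonneg_left hlip (exp_pos (-t)).le
  have hPDlim : Tendsto PD atTop (nhds 0) := by
    apply tendsto_zero_aux PD D hPDdiff hDdiff hγ0 hrelD hDb
    intro s hs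
    calc |deriv PD s| ≤ Lc * exp (-s) * |D s| := hPDb s hs
    _ ≤ (Lc * (2*Cb)) * exp (-(1*s)) := by
        rw [show -(1*s) = -s by ring]
        have h1 := hDb s hs
        have h2 : (0:ℝ) < exp (-s) := exp_pos _
        have hmul := mul_le_mul_of_nonneg_right (mul_le_mul_of_nonneg_left h1 hLc0) h2.le
        nlinarith [hmul]
  -- the bootstrapping step
  have hkey : ∀ a A : ℝ, 0 ≤ a → 0 ≤ A → (∀ t, 0 ≤ t → |D t| ≤ A * exp (-(a*t))) →
      ∀ t, 0 ≤ t → |D t| ≤ (Lc * A / ((1+a) * (1+a-γ))) * exp (-((a+(1-γ))*t)) := by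
    intro a A ha hA hbound
    have h1a : (0:ℝ) < 1 + a := by linarith
    have h1aγ : (0:ℝ) < 1 + a - γ := by linarith
    have h1 : ∀ t, 0 ≤ t → |deriv PD t| ≤ (Lc * A) * exp (-((1+a)*t)) := by
      intro t ht
      calc |deriv PD t| ≤ Lc * exp (-t) * |D t| := hPDb t ht
      _ ≤ Lc * exp (-t) * (A * exp (-(a*t))) := by
          apply mul_le_mul_of_nonneg_left (hbound t ht)
          positivity
      _ = (Lc * A) * exp (-((1+a)*t)) := by
          rw [show -((1+a)*t) = -t + -(a*t) by ring, Real.exp_add]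
          ring
    have h2 := decay_bound PD hPDdiff h1a h1 hPDlim
    have h3 : ∀ t, 0 ≤ t → |deriv D t| ≤ (Lc * A / (1+a)) * exp (-((1+a-γ)*t)) := by
      intro t ht
      rw [hrelD t, abs_mul, abs_of_nonneg (le_of_lt (exp_pos _))]
      calc exp (γ*t) * |PD t| ≤ exp (γ*t) * ((Lc * A/(1+a)) * exp (-((1+a)*t))) := by
            apply mul_le_mul_of_nonneg_left (h2 t ht) (le_of_lt (exp_pos _))
      _ = (Lc * A / (1+a)) * exp (-((1+a-γ)*t)) := by
          rw [show -((1+a-γ)*t) = γ*t + -((1+a)*t) by ring, Real.exp_add]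
          ring
    have h4 := decay_bound D hDdiff h1aγ h3 hDlim
    intro t ht
    calc |D t| ≤ (Lc * A / (1+a) / (1+a-γ)) * exp (-((1+a-γ)*t)) := h4 t ht
    _ = (Lc * A / ((1+a) * (1+a-γ))) * exp (-((a+(1-γ))*t)) := by
        rw [div_div, show (1+a-γ) = a+(1-γ) by ring]
  -- the iteration
  set A : ℕ → ℝ := fun k => Nat.recAux (2*Cb)
    (fun k Ak => Lc * Ak / ((1+(k:ℝ)*(1-γ)) * (1+(k:ℝ)*(1-γ)-γ))) k with hA
  have hAsucc : ∀ k : ℕ, A (k+1) = Lc * A k / ((1+(k:ℝ)*(1-γ)) * (1+(k:ℝ)*(1-γ)-γ)) := by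
    intro k; rfl
  have hind : ∀ k : ℕ, 0 ≤ A k ∧ ∀ t, 0 ≤ t → |D t| ≤ A k * exp (-(((k:ℝ)*(1-γ))*t)) := by
    intro k
    induction k with
    | zero =>
        have hA0 : A 0 = 2*Cb := rfl
        constructor
        · rw [hA0]; linarith
        · intro t ht
          rw [hA0]
          simpa using hDb t ht
    | succ k ih =>
        obtain ⟨ih0, ih1⟩ := ih
        have hstep := hkey ((k:ℝ)*(1-γ)) (A k) (mul_nonneg (Nat.cast_nonneg k) (by linarith)) ih0 ih1
        constructor
        · rw [hAsucc k]
          have d1 : (0:ℝ) < 1+(k:ℝ)*(1-γ) := by nlinarith [Nat.cast_nonneg (α := ℝ) k]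
          have d2 : (0:ℝ) < 1+(k:ℝ)*(1-γ)-γ := by nlinarith [Nat.cast_nonneg (α := ℝ) k]
          positivity
        · intro t ht
          have := hstep t ht
          rw [hAsucc k]
          convert this using 3
          push_cast
          ring
  -- A k gets arbitrarily small
  have hAsmall : ∀ ε : ℝ, 0 < ε → ∃ k : ℕ, A k < ε := by
    intro ε hε
    obtain ⟨k₀, hk₀⟩ := exists_nat_ge (2*Lc/(1-γ))
    have hhalf : ∀ j : ℕ, A (k₀ + j) ≤ A k₀ * (1/2)^j := by
      intro j
      induction j with
      | zero => simp
      | succ j ihj =>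
          have hk : (k₀:ℝ) ≤ ((k₀+j:ℕ):ℝ) := by push_cast; linarith [Nat.cast_nonneg (α := ℝ) j]
          have d2 : (1+((k₀+j:ℕ):ℝ)*(1-γ)-γ) = (((k₀+j:ℕ):ℝ)+1)*(1-γ) := by ring
          have hge : 2*Lc ≤ (1+((k₀+j:ℕ):ℝ)*(1-γ)) * (1+((k₀+j:ℕ):ℝ)*(1-γ)-γ) := by
            have hkj : 2*Lc/(1-γ) ≤ ((k₀+j:ℕ):ℝ) := le_trans hk₀ hk
            have h1γ : (0:ℝ) < 1-γ := by linarith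
            rw [div_le_iff₀ h1γ] at hkj
            have e1 : (1:ℝ) ≤ 1+((k₀+j:ℕ):ℝ)*(1-γ) := by nlinarith [Nat.cast_nonneg (α := ℝ) (k₀+j)]
            have e2 : 2*Lc ≤ 1+((k₀+j:ℕ):ℝ)*(1-γ)-γ := by nlinarith
            nlinarith
          have hAk1 : A (k₀+j+1) ≤ A (k₀+j) / 2 := by
            rw [hAsucc (k₀+j)]
            rcases eq_or_lt_of_le hLc0 with h0 | h0
            · rw [← h0]
              simp only [zero_mul, zero_div]
              exact div_nonneg (hind (k₀+j)).1 (by norm_num)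
            · have d1 : (0:ℝ) < 1+((k₀+j:ℕ):ℝ)*(1-γ) := by nlinarith [Nat.cast_nonneg (α := ℝ) (k₀+j)]
              have d2' : (0:ℝ) < 1+((k₀+j:ℕ):ℝ)*(1-γ)-γ := by nlinarith [Nat.cast_nonneg (α := ℝ) (k₀+j)]
              have hd : (0:ℝ) < (1+((k₀+j:ℕ):ℝ)*(1-γ)) * (1+((k₀+j:ℕ):ℝ)*(1-γ)-γ) := by positivity
              rw [div_le_div_iff₀ hd (by norm_num : (0:ℝ) < 2)]
              have hAnn := (hind (k₀+j)).1
              nlinarith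
          calc A (k₀+(j+1)) = A (k₀+j+1) := by rw [← Nat.add_assoc]
          _ ≤ A (k₀+j)/2 := hAk1
          _ ≤ (A k₀ * (1/2)^j)/2 := by linarith
          _ = A k₀ * (1/2)^(j+1) := by ring
    have hA0 := (hind k₀).1
    obtain ⟨j, hj⟩ := exists_pow_lt_of_lt_one (show (0:ℝ) < ε/(A k₀+1) by positivity)
      (show (1:ℝ)/2 < 1 by norm_num)
    refine ⟨k₀ + j, lt_of_le_of_lt (hhalf j) ?_⟩
    have : A k₀ * (1/2)^j ≤ A k₀ * (ε/(A k₀+1)) := by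
      apply mul_le_mul_of_nonneg_left (le_of_lt hj) hA0
    have hfrac : A k₀ * (ε/(A k₀+1)) < ε := by
      rw [mul_div_assoc'] -- maybe not needed
      have h1 : A k₀/(A k₀+1) < 1 := by
        rw [div_lt_one (by positivity)]
        linarith
      calc A k₀ * ε/(A k₀+1) = (A k₀/(A k₀+1)) * ε := by ring
      _ < 1 * ε := by apply mul_lt_mul_of_pos_right h1 hε
      _ = ε := by ring
    linarith
  -- conclusion
  intro t ht
  by_contra hne
  have hpos : 0 < |D t| := by
    rw [abs_pos, hD]
    simp only [sub_ne_zero]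
    exact hne
  obtain ⟨k, hk⟩ := hAsmall (|D t|) hpos
  have hb := (hind k).2 t ht
  have hexple : exp (-(((k:ℝ)*(1-γ))*t)) ≤ 1 := by
    have h0 : -(((k:ℝ)*(1-γ))*t) ≤ 0 := by
      have : (0:ℝ) ≤ ((k:ℝ)*(1-γ))*t :=
        mul_nonneg (mul_nonneg (Nat.cast_nonneg k) (by linarith)) ht
      linarith
    calc exp (-(((k:ℝ)*(1-γ))*t)) ≤ exp 0 := Real.exp_le_exp.2 h0
    _ = 1 := Real.exp_zero
  have : |D t| ≤ A k := by
    calc |D t| ≤ A k * exp (-(((k:ℝ)*(1-γ))*t)) := hb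
    _ ≤ A k * 1 := mul_le_mul_of_nonneg_left hexple (hind k).1
    _ = A k := by ring
  linarith

lemma main_aux (p γ : ℝ) (hp : 2 < p) (hγ0 : 0 < γ) (hγ1 : γ < 1) (K : ℕ) (hK : 1 ≤ K)
    (U V : ℝ → ℝ) (hU : IsUsol p γ K U) (hV : IsUsol p γ K V)
    {LU LV : ℝ} (hLU0 : 0 < LU) (hLV0 : 0 < LV)
    (hUlim : Tendsto U atTop (nhds LU)) (hVlim : Tendsto V atTop (nhds LV))
    (hLe : LV ≤ LU) : Set.EqOn U V (Set.Ici 0) := by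
  obtain ⟨⟨hU2, hU0, heqU⟩, ⟨CU, hCU⟩, ⟨hSUfin, hSUcard⟩, -⟩ := hU
  obtain ⟨⟨hV2, hV0, heqV⟩, ⟨CV, hCV⟩, ⟨hSVfin, hSVcard⟩, -⟩ := hV
  have hp2 : (0:ℝ) < p - 2 := by linarith
  set β : ℝ := (1-γ)/(p-2) with hβdef
  have hβ : 0 < β := by rw [hβdef]; apply div_pos <;> linarith
  set τ : ℝ := Real.log (LU/LV) / β with hτdef
  have hLUV1 : 1 ≤ LU/LV := (one_le_div hLV0).2 hLe
  have hτ0 : 0 ≤ τ := div_nonneg (Real.log_nonneg hLUV1) hβ.le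
  set a : ℝ := exp (-(β*τ)) with hadef
  have ha_pos : 0 < a := exp_pos _
  have haval : a = LV/LU := by
    rw [hadef, hτdef]
    rw [show -(β * (Real.log (LU/LV) / β)) = -Real.log (LU/LV) by field_simp]
    rw [Real.exp_neg, Real.exp_log (by positivity)]
    rw [inv_div]
  have haLV : a * LU = LV := by
    rw [haval]
    field_simp
  have hscal : exp ((γ-1)*τ) = a ^ (p-2) := by
    rw [hadef, ← Real.exp_mul]
    congr 1
    rw [hβdef]
    field_simp
    ring
  -- derivative facts
  have h2eq : (2 : WithTop ℕ∞) = 1 + 1 := by norm_num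
  have hUdiff : Differentiable ℝ U := hU2.differentiable (by norm_num)
  have hdU : Differentiable ℝ (deriv U) := by
    have h := hU2
    rw [h2eq] at h
    exact (contDiff_succ_iff_deriv.1 h).2.2.differentiable (by norm_num)
  have hU2' : ContDiff ℝ 2 U := hU2
  set Vt : ℝ → ℝ := fun t => a * U (t + τ) with hVtdef
  have hVt2 : ContDiff ℝ 2 Vt :=
    contDiff_const.mul (hU2'.comp (contDiff_id.add contDiff_const))
  have hVtderiv : ∀ t, deriv Vt t = a * deriv U (t+τ) := by
    intro t
    have h1 : HasDerivAt (fun s : ℝ => U (s + τ)) (deriv U (t+τ)) t := by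
      have := ((hUdiff (t+τ)).hasDerivAt).comp t ((hasDerivAt_id t).add_const τ)
      simpa [Function.comp_def] using this
    rw [hVtdef]
    exact (h1.const_mul a).deriv
  have hexpdiff : Differentiable ℝ (fun t : ℝ => exp (-γ * t)) :=
    Real.differentiable_exp.comp (differentiable_id.const_mul (-γ))
  have hFUdiff : Differentiable ℝ (fun s => exp (-γ * s) * deriv U s) := hexpdiff.mul hdU
  have heqVt : ∀ t, 0 ≤ t → deriv (fun s => exp (-γ * s) * deriv Vt s) t
      = -(exp (-t) * |Vt t| ^ (p-2) * Vt t) := by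
    intro t ht
    have hfun : (fun s => exp (-γ * s) * deriv Vt s)
        = fun s => (a * exp (γ*τ)) * ((fun r => exp (-γ * r) * deriv U r) (s+τ)) := by
      funext s
      simp only
      rw [hVtderiv s]
      rw [show (-γ * (s+τ)) = (-γ*s) + (-(γ*τ)) by ring, Real.exp_add]
      rw [Real.exp_neg]
      field_simp
    have h1 : HasDerivAt (fun s : ℝ => (fun r => exp (-γ * r) * deriv U r) (s+τ))
        (deriv (fun r => exp (-γ * r) * deriv U r) (t+τ)) t := by
      have := ((hFUdiff (t+τ)).hasDerivAt).comp t ((hasDerivAt_id t).add_const τ)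
      simpa [Function.comp_def] using this
    rw [hfun, (h1.const_mul (a * exp (γ*τ))).deriv]
    rw [heqU (t+τ) (by linarith)]
    -- now pure algebra
    have habs : |Vt t| = a * |U (t+τ)| := by
      rw [hVtdef]
      simp only
      rw [abs_mul, abs_of_pos ha_pos]
    rw [habs, hVtdef]
    simp only
    rw [Real.mul_rpow ha_pos.le (abs_nonneg _)]
    rw [show (-(t+τ)) = (-t) + (-τ) by ring, Real.exp_add]
    have hkey : a * exp (γ*τ) * exp (-τ) = a ^ (p-2) * a := by
      rw [← hscal]
      have hee : exp (γ*τ) * exp (-τ) = exp ((γ-1)*τ) := by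
        rw [← Real.exp_add]; congr 1; ring
      calc a * exp (γ*τ) * exp (-τ) = a * (exp (γ*τ) * exp (-τ)) := by ring
      _ = a * exp ((γ-1)*τ) := by rw [hee]
      _ = exp ((γ-1)*τ) * a := by ring
    linear_combination (-(exp (-t) * |U (t+τ)| ^ (p-2) * U (t+τ))) * hkey
  have hVtb : ∀ t, 0 ≤ t → |Vt t| ≤ a * CU := by
    intro t ht
    rw [hVtdef]
    simp only
    rw [abs_mul, abs_of_pos ha_pos]
    exact mul_le_mul_of_nonneg_left (hCU (t+τ) (by linarith)) ha_pos.le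
  have hVtlim : Tendsto Vt atTop (nhds LV) := by
    have hshift : Tendsto (fun t : ℝ => U (t + τ)) atTop (nhds LU) :=
      hUlim.comp (tendsto_atTop_add_const_right atTop τ tendsto_id)
    have := hshift.const_mul a
    rwa [haLV] at this
  -- apply the same-limit uniqueness to V and Vt
  have hVVt : ∀ t, 0 ≤ t → V t = Vt t :=
    same_limit_eq hp hγ0 hγ1 V Vt hV2 hVt2 heqV heqVt hCV hVtb hVlim hVtlim
  have hUτ : U τ = 0 := by
    have h0 := hVVt 0 le_rfl
    rw [hV0, hVtdef] at h0
    simp only at h0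
    rw [zero_add] at h0
    have := h0.symm
    rcases mul_eq_zero.1 this with h | h
    · exact absurd h (ne_of_gt ha_pos)
    · exact h
  rcases eq_or_lt_of_le hτ0 with hτeq | hτpos
  · -- τ = 0 : conclude
    have ha1 : a = 1 := by
      rw [hadef, ← hτeq]
      simp
    intro t ht
    have := hVVt t ht
    rw [hVtdef] at this
    simp only at this
    rw [← hτeq, add_zero, ha1, one_mul] at this
    exact this.symm
  · -- τ > 0 : contradiction with zero counts
    exfalso
    set SU := {t : ℝ | 0 < t ∧ U t = 0} with hSU
    set SV := {t : ℝ | 0 < t ∧ V t = 0} with hSV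
    have hsub : insert τ ((fun t => t + τ) '' SV) ⊆ SU := by
      intro x hx
      rcases Set.mem_insert_iff.1 hx with hxτ | hximg
      · rw [hxτ]
        exact ⟨hτpos, hUτ⟩
      · obtain ⟨t, ⟨htpos, htV⟩, rfl⟩ := hximg
        have hmem : (0:ℝ) < t + τ := by linarith
        have hUz : U (t + τ) = 0 := by
          have := hVVt t htpos.le
          rw [htV, hVtdef] at this
          simp only at this
          rcases mul_eq_zero.1 this.symm with h | h
          · exact absurd h (ne_of_gt ha_pos)
          · exact h
        exact ⟨hmem, hUz⟩
    have hnotmem : τ ∉ (fun t => t + τ) '' SV := by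
      rintro ⟨t, ⟨htpos, -⟩, hteq⟩
      simp only at hteq
      linarith
    have himgfin : ((fun t => t + τ) '' SV).Finite := hSVfin.image _
    have himgcard : ((fun t => t + τ) '' SV).ncard = K - 1 := by
      rw [Set.ncard_image_of_injective _ (add_left_injective τ)]
      exact hSVcard
    have hinscard : (insert τ ((fun t => t + τ) '' SV)).ncard = (K-1) + 1 := by
      rw [Set.ncard_insert_of_notMem hnotmem himgfin, himgcard]
    have hle := Set.ncard_le_ncard hsub hSUfin
    rw [hinscard, hSUcard] at hle
    omega

/-- uniqueness of bounded solutions of (P_γ), `γ ∈ (0, γ_p)`,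
with exactly `K−1` zeros in `(0,∞)` and positive limit at `+∞`. -/
theorem stmt2 (N : ℕ) (hN : 3 ≤ N) (p : ℝ) (hp : 2 < p) (K : ℕ) (hK : 1 ≤ K)
    (γ : ℝ) (hγ0 : 0 < γ) (hγ1 : γ < gammaP N p)
    (U V : ℝ → ℝ) (hU : IsUsol p γ K U) (hV : IsUsol p γ K V) :
    Set.EqOn U V (Set.Ici 0) := by
  have hN3 : (3:ℝ) ≤ (N:ℝ) := by exact_mod_cast hN
  have hγlt1 : γ < 1 := by
    apply lt_of_lt_of_le hγ1
    rw [gammaP]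
    have hα : 0 ≤ alphaP N p := le_max_right _ _
    rw [div_le_one (by linarith)]
    linarith
  obtain ⟨LU, hLU0, hLUlim⟩ := hU.2.2.2
  obtain ⟨LV, hLV0, hLVlim⟩ := hV.2.2.2
  rcases le_total LV LU with hle | hle
  · exact main_aux p γ hp hγ0 hγlt1 K hK U V hU hV hLU0 hLV0 hLUlim hLVlim hle
  · exact (main_aux p γ hp hγ0 hγlt1 K hK V U hV hU hLV0 hLU0 hLVlim hLUlim hle).symm
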